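/- For discrete functions f, g on {0,...,N+1}, h·Σ_{j=1}^{N} g_j (∂_h f)_j = h·Σ_{j=0}^{N} (m_h^+ g)_j (∂_h^+ f)_j − (h/2) g_0 (∂_h^+ f)_0 − (h/2) g_{N+1} (∂_h^- f)_{N+1}. -/

import Mathlib

lemma aux10 (f g : ℕ → ℝ) (N : ℕ) :
    ∑ j ∈ Finset.Icc 1 N, g j * (f (j + 1) - f (j - 1)) =
      ∑ j ∈ Finset.range (N + 1), (g (j + 1) + g j) * (f (j + 1) - f j)
        - g 0 * (f 1 - f 0) - g (N + 1) * (f (N + 1) - f N) := by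
  induction N with
  | zero => simp; ring
  | succ n ih =>
    rw [Finset.sum_Icc_succ_top (by omega), Finset.sum_range_succ, ih]
    simp only [Nat.add_sub_cancel]
    ring

theorem stmt10 (N : ℕ) (h : ℝ) (hh : h = 1 / (N + 1)) (f g : ℕ → ℝ) :
    h * ∑ j ∈ Finset.Icc 1 N, g j * ((f (j + 1) - f (j - 1)) / (2 * h)) =
      h * ∑ j ∈ Finset.range (N + 1), ((g (j + 1) + g j) / 2) * ((f (j + 1) - f j) / h)
        - (h / 2) * g 0 * ((f 1 - f 0) / h)
        - (h / 2) * g (N + 1) * ((f (N + 1) - f N) / h) := by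
  have hne : h ≠ 0 := by
    rw [hh]; positivity
  have key := aux10 f g N
  calc h * ∑ j ∈ Finset.Icc 1 N, g j * ((f (j + 1) - f (j - 1)) / (2 * h))
      = (1/2) * ∑ j ∈ Finset.Icc 1 N, g j * (f (j + 1) - f (j - 1)) := by
        rw [Finset.mul_sum, Finset.mul_sum]
        exact Finset.sum_congr rfl fun j _ => by field_simp
    _ = (1/2) * (∑ j ∈ Finset.range (N + 1), (g (j + 1) + g j) * (f (j + 1) - f j)
        - g 0 * (f 1 - f 0) - g (N + 1) * (f (N + 1) - f N)) := by rw [key]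
    _ = _ := by
        rw [Finset.mul_sum,
          Finset.sum_congr rfl fun j _ => show h * (((g (j+1) + g j) / 2) * ((f (j+1) - f j) / h))
            = (1:ℝ)/2 * ((g (j+1) + g j) * (f (j+1) - f j)) from by field_simp,
          ← Finset.mul_sum]
        field_simp
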